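/- Let σ be a sphere in ℝ³ centered at p with radius ρ, let ℓ be a line in ℝ³ not parallel to the z-axis, let V_ℓ be the vertical plane (containing the z-direction) containing ℓ, and suppose p lies strictly above the plane H_ℓ that contains ℓ and is orthogonal to V_ℓ. Then ℓ intersects σ (i.e., dist(p, ℓ) ≤ ρ) if and only if (i) the xy-projection of ℓ intersects the xy-projection of σ (a disk of radius ρ) and (ii) ℓ lies (weakly) above the line ℓ⁻ that is contained in V_ℓ, is parallel to ℓ, and is tangent to σ from below. -/

import Mathlib

open RealInnerProductSpace


lemma lineDist (p q v : EuclideanSpace ℝ (Fin 3)) (hv : v ≠ 0) :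
    Metric.infDist p {x : EuclideanSpace ℝ (Fin 3) | ∃ t : ℝ, x = q + t • v}
      = ‖(p - q) - (⟪p - q, v⟫ / ‖v‖ ^ 2) • v‖ := by
  have hvpos : (0:ℝ) < ‖v‖ := norm_pos_iff.2 hv
  have hv2 : (0:ℝ) < ‖v‖ ^ 2 := by positivity
  set w := p - q with hw
  set t₀ : ℝ := ⟪w, v⟫ / ‖v‖ ^ 2 with ht₀
  have horth : ⟪w - t₀ • v, v⟫ = 0 := by
    rw [inner_sub_left, real_inner_smul_left, real_inner_self_eq_norm_sq, ht₀]
    field_simp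
    ring
  apply le_antisymm
  · have hmem : q + t₀ • v ∈ {x : EuclideanSpace ℝ (Fin 3) | ∃ t : ℝ, x = q + t • v} :=
      ⟨t₀, rfl⟩
    calc Metric.infDist p {x : EuclideanSpace ℝ (Fin 3) | ∃ t : ℝ, x = q + t • v}
        ≤ dist p (q + t₀ • v) := Metric.infDist_le_dist_of_mem hmem
      _ = ‖w - t₀ • v‖ := by rw [dist_eq_norm, hw]; congr 1; abel
  · rw [← not_lt]
    intro hlt
    obtain ⟨y, ⟨t, rfl⟩, hy⟩ := (Metric.infDist_lt_iff (s := {x : EuclideanSpace ℝ (Fin 3) | ∃ t : ℝ, x = q + t • v}) ⟨q, 0, by simp⟩).1 hlt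
    rw [dist_eq_norm] at hy
    refine absurd hy (not_lt.2 ?_)
    have hrep : p - (q + t • v) = (w - t₀ • v) + (t₀ - t) • v := by
      rw [hw]; module
    rw [hrep]
    have hexp := norm_add_sq_real (w - t₀ • v) ((t₀ - t) • v)
    have hz : ⟪w - t₀ • v, (t₀ - t) • v⟫ = 0 := by
      rw [real_inner_smul_right, horth]; ring
    rw [hz] at hexp
    nlinarith [norm_nonneg (w - t₀ • v), norm_nonneg ((w - t₀ • v) + (t₀ - t) • v),
      norm_nonneg ((t₀ - t) • v), sq_nonneg ‖(t₀ - t) • v‖]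


set_option maxHeartbeats 1000000 in
/-- Mohaban–Sharir criterion: let `σ` be the sphere centered at `p` with radius
`ρ > 0`, `ℓ` the line through `q` with direction `v` not parallel to the
`z`-axis, `e₃` the vertical direction and `n = e₃ - (v₂/‖v‖²)v` the upward
normal of the plane `H_ℓ` (the plane containing `ℓ` orthogonal to the vertical
plane `V_ℓ` of `ℓ`). If `p` lies strictly above `H_ℓ`, then `ℓ` meets `σ`
(i.e. `dist(p, ℓ) ≤ ρ`) iff (i) the `xy`-projections of `ℓ` and `σ` intersect
and (ii) `ℓ` lies weakly above the parallel line `ℓ⁻` in `V_ℓ` tangent to `σ`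
from below — i.e. some parallel line `q + s•e₃ + ℝ•v` with `s ≤ 0` is at
distance exactly `ρ` from `p` with `p` on its upper side. -/
theorem stmt12 (p q v e₃ n : EuclideanSpace ℝ (Fin 3)) (ρ : ℝ) (hρ : 0 < ρ)
    (hv : ¬(v 0 = 0 ∧ v 1 = 0)) (hvne : v ≠ 0)
    (he0 : e₃ 0 = 0) (he1 : e₃ 1 = 0) (he2 : e₃ 2 = 1)
    (hn : n = e₃ - (v 2 / ‖v‖ ^ 2) • v)
    (habove : 0 < ⟪p - q, n⟫) :
    Metric.infDist p {x : EuclideanSpace ℝ (Fin 3) | ∃ t : ℝ, x = q + t • v} ≤ ρ ↔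
      ((∃ t : ℝ, (q 0 + t * v 0 - p 0) ^ 2 + (q 1 + t * v 1 - p 1) ^ 2 ≤ ρ ^ 2) ∧
        (∃ s : ℝ, s ≤ 0 ∧
          Metric.infDist p
            {x : EuclideanSpace ℝ (Fin 3) | ∃ t : ℝ, x = (q + s • e₃) + t • v} = ρ ∧
          0 ≤ ⟪p - (q + s • e₃), n⟫)) := by
  have hvpos : (0:ℝ) < ‖v‖ := norm_pos_iff.2 hvne
  have hv2 : (0:ℝ) < ‖v‖ ^ 2 := by positivity
  set w : EuclideanSpace ℝ (Fin 3) := p - q with hw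
  set t₀ : ℝ := ⟪w, v⟫ / ‖v‖ ^ 2 with ht₀
  set u : EuclideanSpace ℝ (Fin 3) := w - t₀ • v with hu
  have hinner_e3v : ⟪e₃, v⟫ = v 2 := by
    simp [PiLp.inner_apply, Fin.sum_univ_three, he0, he1, he2]
  have hinner_e3e3 : ⟪e₃, e₃⟫ = (1:ℝ) := by
    rw [PiLp.inner_apply]
    simp [ Fin.sum_univ_three, he0, he1, he2]
  have hnv : ⟪n, v⟫ = 0 := by
    rw [hn, inner_sub_left, real_inner_smul_left, real_inner_self_eq_norm_sq, hinner_e3v]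
    field_simp
    ring
  have hvn0 : ⟪v, n⟫ = 0 := by rw [real_inner_comm]; exact hnv
  have huv : ⟪u, v⟫ = 0 := by
    rw [hu, inner_sub_left, real_inner_smul_left, real_inner_self_eq_norm_sq, ht₀]
    field_simp
    ring
  have he3n : ⟪e₃, n⟫ = ‖n‖ ^ 2 := by
    rw [← real_inner_self_eq_norm_sq]
    nth_rewrite 2 [hn]
    rw [inner_sub_left, real_inner_smul_left, hvn0]
    ring
  have hnormv : ‖v‖ ^ 2 = v 0 ^ 2 + v 1 ^ 2 + v 2 ^ 2 := by
    rw [← real_inner_self_eq_norm_sq, PiLp.inner_apply]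
    simp [PiLp.inner_apply, Fin.sum_univ_three]
  have hn2 : ‖n‖ ^ 2 = (v 0 ^ 2 + v 1 ^ 2) / ‖v‖ ^ 2 := by
    rw [← he3n]
    nth_rewrite 1 [hn]
    rw [inner_sub_right, real_inner_smul_right, hinner_e3e3, hinner_e3v]
    rw [eq_div_iff (ne_of_gt hv2)]
    field_simp
    nlinarith [hnormv]
  have hv01 : (0:ℝ) < v 0 ^ 2 + v 1 ^ 2 := by
    rcases not_and_or.1 hv with h | h
    · positivity
    · positivity
  have hn2pos : (0:ℝ) < ‖n‖ ^ 2 := by rw [hn2]; positivity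
  have hun : (0:ℝ) < ⟪u, n⟫ := by
    have : ⟪u, n⟫ = ⟪w, n⟫ := by
      rw [hu, inner_sub_left, real_inner_smul_left, hvn0]; ring
    rw [this, hw]; exact habove
  -- distance formulas
  have hd0 : Metric.infDist p {x : EuclideanSpace ℝ (Fin 3) | ∃ t : ℝ, x = q + t • v} = ‖u‖ := by
    rw [lineDist p q v hvne]
  have hds : ∀ s : ℝ,
      Metric.infDist p {x : EuclideanSpace ℝ (Fin 3) | ∃ t : ℝ, x = (q + s • e₃) + t • v}
        = ‖u - s • n‖ := by
    intro s
    rw [lineDist p (q + s • e₃) v hvne]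
    congr 1
    have h1 : p - (q + s • e₃) = w - s • e₃ := by rw [hw]; abel
    rw [h1, inner_sub_left, real_inner_smul_left, hinner_e3v, hu, hn, ht₀]
    match_scalars <;> field_simp <;> ring
  have hside : ∀ s : ℝ, ⟪p - (q + s • e₃), n⟫ = ⟪u, n⟫ - s * ‖n‖ ^ 2 := by
    intro s
    have h1 : p - (q + s • e₃) = w - s • e₃ := by rw [hw]; abel
    have h2 : ⟪u, n⟫ = ⟪w, n⟫ := by
      rw [hu, inner_sub_left, real_inner_smul_left, hvn0]; ring
    rw [h1, inner_sub_left, real_inner_smul_left, he3n, h2]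
  have hexp : ∀ s : ℝ, ‖u - s • n‖ ^ 2 = ‖u‖ ^ 2 - 2 * (s * ⟪u, n⟫) + s ^ 2 * ‖n‖ ^ 2 := by
    intro s
    rw [norm_sub_sq_real, real_inner_smul_right, norm_smul, Real.norm_eq_abs, mul_pow, sq_abs]
  rw [hd0]
  constructor
  · intro h
    have h2 : ‖u‖ ^ 2 ≤ ρ ^ 2 := by nlinarith [norm_nonneg u]
    constructor
    · refine ⟨t₀, ?_⟩
      have e0 : q 0 + t₀ * v 0 - p 0 = -(u 0) := by
        simp [hu, hw]; ring
      have e1 : q 1 + t₀ * v 1 - p 1 = -(u 1) := by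
        simp [hu, hw]; ring
      have hnu : ‖u‖ ^ 2 = u 0 ^ 2 + u 1 ^ 2 + u 2 ^ 2 := by
        rw [← real_inner_self_eq_norm_sq, PiLp.inner_apply]
        simp [PiLp.inner_apply, Fin.sum_univ_three]
      rw [e0, e1]
      nlinarith [sq_nonneg (u 2)]
    · set α : ℝ := ⟪u, n⟫ / ‖n‖ ^ 2 with hα
      have hαpos : 0 < α := div_pos hun hn2pos
      have hnpos : (0:ℝ) < ‖n‖ := by nlinarith [norm_nonneg n]
      have hin : 0 ≤ ρ ^ 2 - ‖u‖ ^ 2 + α ^ 2 * ‖n‖ ^ 2 := by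
        have := mul_nonneg (sq_nonneg α) hn2pos.le
        linarith
      set β : ℝ := Real.sqrt (ρ ^ 2 - ‖u‖ ^ 2 + α ^ 2 * ‖n‖ ^ 2) with hβ
      set s : ℝ := α - β / ‖n‖ with hsdef
      have hsq : β ^ 2 = ρ ^ 2 - ‖u‖ ^ 2 + α ^ 2 * ‖n‖ ^ 2 := Real.sq_sqrt hin
      have hsqrt_ge : α * ‖n‖ ≤ β := by
        rw [hβ, ← Real.sqrt_sq (by positivity : (0:ℝ) ≤ α * ‖n‖)]
        apply Real.sqrt_le_sqrt
        nlinarith [h2]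
      have hsle : s ≤ 0 := by
        rw [hsdef, sub_nonpos, le_div_iff₀ hnpos]
        exact hsqrt_ge
      have hs2 : s * ‖n‖ = α * ‖n‖ - β := by
        rw [hsdef]
        field_simp
      have hinner_eq : ⟪u, n⟫ = α * ‖n‖ ^ 2 := by
        rw [hα]; field_simp
      refine ⟨s, hsle, ?_, ?_⟩
      · rw [hds s]
        have hval : ‖u - s • n‖ ^ 2 = ρ ^ 2 := by
          rw [hexp s, hinner_eq]
          linear_combination hsq + (s * ‖n‖ - α * ‖n‖ - β) * hs2
        rw [← Real.sqrt_sq (norm_nonneg (u - s • n)), hval, Real.sqrt_sq hρ.le]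
      · rw [hside s]
        nlinarith [mul_nonneg (neg_nonneg.2 hsle) hn2pos.le]
  · rintro ⟨-, s, hs0, hdist, hsd⟩
    rw [hds s] at hdist
    rw [hside s] at hsd
    have hsq : ‖u - s • n‖ ^ 2 = ρ ^ 2 := by rw [hdist]
    rw [hexp s] at hsq
    have h1 : 0 ≤ -s * ⟪u, n⟫ := mul_nonneg (neg_nonneg.2 hs0) hun.le
    have h2 : 0 ≤ s ^ 2 * ‖n‖ ^ 2 := mul_nonneg (sq_nonneg s) hn2pos.le
    have h3 : ‖u‖ ^ 2 ≤ ρ ^ 2 := by linarith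
    nlinarith [norm_nonneg u, hρ]
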